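/- Let 𝒢 = {G_1, …, G_n} be a collection of bipartite graphs on a common vertex bipartition V_1 ∪ V_2 with |V_1| = |V_2| = n. If for each i ∈ [n] we have d_{G_i}(v) > n/2 for every v ∈ V_1 and d_{G_i}(v) ≥ n/2 for every v ∈ V_2, then 𝒢 contains a transversal perfect matching: a perfect matching M of the complete bipartite graph on V_1 ∪ V_2 together with a bijection φ : M → [n] such that e ∈ E(G_{φ(e)}) for every e ∈ M. -/

import Mathlib

open Finset
open scoped Classical

private lemma injOn_update {n : ℕ} {s : Finset (Fin n)} {f : Fin n → Fin n} {c w : Fin n}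
    (hf : Set.InjOn f ↑s) (hc : c ∉ s) (hw : w ∉ s.image f) :
    Set.InjOn (Function.update f c w) ↑(insert c s) := by
  intro a ha b hb hab
  simp only [coe_insert, Set.mem_insert_iff, mem_coe] at ha hb
  rcases ha with rfl | ha
  · rcases hb with rfl | hb
    · rfl
    · exfalso
      have hbne : b ≠ a := fun h => hc (h ▸ hb)
      rw [Function.update_self, Function.update_of_ne hbne] at hab
      exact hw (mem_image.mpr ⟨b, hb, hab.symm⟩)
  · rcases hb with rfl | hb
    · exfalso
      have hane : a ≠ b := fun h => hc (h ▸ ha)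
      rw [Function.update_self, Function.update_of_ne hane] at hab
      exact hw (mem_image.mpr ⟨a, ha, hab⟩)
    · have hane : a ≠ c := fun h => hc (h ▸ ha)
      have hbne : b ≠ c := fun h => hc (h ▸ hb)
      rw [Function.update_of_ne hane, Function.update_of_ne hbne] at hab
      exact hf ha hb hab

private lemma not_mem_image_of_injOn {n : ℕ} {s t : Finset (Fin n)} {f : Fin n → Fin n}
    (hf : Set.InjOn f ↑s) (ht : t ⊆ s) {j : Fin n} (hj : j ∈ s) (hjt : j ∉ t) :
    f j ∉ t.image f := by
  intro hmem
  obtain ⟨a, hat, ha⟩ := mem_image.mp hmem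
  exact hjt ((hf (ht hat) hj ha) ▸ hat)

private lemma add_edge {n : ℕ} {G : Fin n → Fin n → Fin n → Prop}
    {s : Finset (Fin n)} {f g : Fin n → Fin n}
    (hf : Set.InjOn f ↑s) (hg : Set.InjOn g ↑s)
    (hG : ∀ i ∈ s, G i (g i) (f i))
    {c v w : Fin n} (hc : c ∉ s) (hv : v ∉ s.image g) (hw : w ∉ s.image f)
    (hcvw : G c v w) :
    Set.InjOn (Function.update f c w) ↑(insert c s) ∧
    Set.InjOn (Function.update g c v) ↑(insert c s) ∧
    (∀ i ∈ insert c s, G i (Function.update g c v i) (Function.update f c w i)) ∧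
    (insert c s).card = s.card + 1 ∧
    (insert c s).image (Function.update f c w) = insert w (s.image f) ∧
    (insert c s).image (Function.update g c v) = insert v (s.image g) := by
  have himf : s.image (Function.update f c w) = s.image f :=
    image_congr (fun x hx => Function.update_of_ne (by rintro rfl; exact hc hx) _ _)
  have himg : s.image (Function.update g c v) = s.image g :=
    image_congr (fun x hx => Function.update_of_ne (by rintro rfl; exact hc hx) _ _)
  refine ⟨injOn_update hf hc hw, injOn_update hg hc hv, ?_, card_insert_of_notMem hc, ?_, ?_⟩
  · intro i hi
    rcases mem_insert.mp hi with rfl | his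
    · simpa using hcvw
    · have hic : i ≠ c := fun h => hc (h ▸ his)
      rw [Function.update_of_ne hic, Function.update_of_ne hic]
      exact hG i his
  · rw [image_insert, Function.update_self, himf]
  · rw [image_insert, Function.update_self, himg]

private lemma update_mem_data {n : ℕ} {s : Finset (Fin n)} {f : Fin n → Fin n}
    (hf : Set.InjOn f ↑s) {a z : Fin n} (ha : a ∈ s) (hz : z ∉ s.image f) :
    Set.InjOn (Function.update f a z) ↑s ∧
    s.image (Function.update f a z) = insert z ((s.image f).erase (f a)) := by
  constructor
  · intro p hp q hq h
    by_cases hpa : p = a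
    · by_cases hqa : q = a
      · rw [hpa, hqa]
      · exfalso
        rw [hpa, Function.update_self, Function.update_of_ne hqa] at h
        exact hz (h ▸ mem_image_of_mem f hq)
    · by_cases hqa : q = a
      · exfalso
        rw [hqa, Function.update_self, Function.update_of_ne hpa] at h
        exact hz (h.symm ▸ mem_image_of_mem f hp)
      · rw [Function.update_of_ne hpa, Function.update_of_ne hqa] at h
        exact hf hp hq h
  · ext t
    simp only [mem_image, mem_insert, mem_erase]
    constructor
    · rintro ⟨x, hx, rfl⟩
      by_cases hxa : x = a
      · subst hxa; rw [Function.update_self]; exact Or.inl rfl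
      · rw [Function.update_of_ne hxa]
        refine Or.inr ⟨fun h => hxa (hf hx ha h), ⟨x, hx, rfl⟩⟩
    · rintro (rfl | ⟨hne, x, hx, rfl⟩)
      · exact ⟨a, ha, Function.update_self _ _ _⟩
      · have hxa : x ≠ a := fun h => hne (h ▸ rfl)
        exact ⟨x, hx, Function.update_of_ne hxa _ _⟩

/-- Repoint the edges of a chain of colours: colour `a` points to where `b` pointed, etc.,
the last colour points to the fresh vertex `z`; frees up `f a`. -/
private lemma repoint {n : ℕ} {G : Fin n → Fin n → Fin n → Prop}
    {s : Finset (Fin n)} {g : Fin n → Fin n} :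
    ∀ (L : List (Fin n)) (a : Fin n) (f : Fin n → Fin n) (z : Fin n),
      Set.InjOn f ↑s → (∀ i ∈ s, G i (g i) (f i)) →
      (a :: L).Nodup → (∀ l ∈ a :: L, l ∈ s) →
      z ∉ s.image f →
      List.Chain (fun p q => G p (g p) (f q)) a L →
      G ((a :: L).getLast (List.cons_ne_nil a L)) (g ((a :: L).getLast (List.cons_ne_nil a L))) z →
      ∃ f' : Fin n → Fin n,
        Set.InjOn f' ↑s ∧ (∀ i ∈ s, G i (g i) (f' i)) ∧
        (∀ i, i ∉ a :: L → f' i = f i) ∧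
        s.image f' = insert z ((s.image f).erase (f a)) := by
  intro L
  induction L with
  | nil =>
    intro a f z hf hG _ hmem hz _ hlast
    have ha : a ∈ s := hmem a (by simp)
    obtain ⟨hinj, himg⟩ := update_mem_data hf ha hz
    refine ⟨Function.update f a z, hinj, ?_, ?_, himg⟩
    · intro i hi
      by_cases hia : i = a
      · subst hia
        rw [Function.update_self]
        simpa using hlast
      · rw [Function.update_of_ne hia]
        exact hG i hi
    · intro i hi
      have : i ≠ a := by simpa using hi
      exact Function.update_of_ne this _ _
  | cons b L ih =>
    intro a f z hf hG hnodup hmem hz hchain hlast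
    have ha : a ∈ s := hmem a (by simp)
    have hb : b ∈ s := hmem b (by simp)
    have hnodup' : (b :: L).Nodup := (List.nodup_cons.mp hnodup).2
    have hanotin : a ∉ b :: L := (List.nodup_cons.mp hnodup).1
    have hmem' : ∀ l ∈ b :: L, l ∈ s := fun l hl => hmem l (List.mem_cons_of_mem a hl)
    have hchain' : List.Chain (fun p q => G p (g p) (f q)) b L := (List.chain_cons.mp hchain).2
    have hab : G a (g a) (f b) := (List.chain_cons.mp hchain).1
    have hlast' : G ((b :: L).getLast (List.cons_ne_nil b L))
        (g ((b :: L).getLast (List.cons_ne_nil b L))) z := by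
      have : (a :: b :: L).getLast (List.cons_ne_nil _ _) = (b :: L).getLast (List.cons_ne_nil b L) := by
        simp [List.getLast_cons]
      rwa [this] at hlast
    obtain ⟨f₁, hf₁, hG₁, hagree₁, himg₁⟩ := ih b f z hf hG hnodup' hmem' hz hchain' hlast'
    have hf₁a : f₁ a = f a := hagree₁ a hanotin
    have hfbnot : f b ∉ s.image f₁ := by
      rw [himg₁]
      intro hmemb
      rcases mem_insert.mp hmemb with h | h
      · exact hz (h ▸ mem_image_of_mem f hb)
      · exact (mem_erase.mp h).1 rfl
    obtain ⟨hinj, himg⟩ := update_mem_data hf₁ ha hfbnot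
    refine ⟨Function.update f₁ a (f b), hinj, ?_, ?_, ?_⟩
    · intro i hi
      by_cases hia : i = a
      · subst hia
        rw [Function.update_self]
        exact hab
      · rw [Function.update_of_ne hia]
        exact hG₁ i hi
    · intro i hi
      have hia : i ≠ a := fun h => hi (h ▸ List.mem_cons_self)
      have hibl : i ∉ b :: L := fun h => hi (List.mem_cons_of_mem a h)
      rw [Function.update_of_ne hia]
      exact hagree₁ i hibl
    · rw [himg, himg₁, hf₁a]
      -- goal: insert (f b) ((insert z ((s.image f).erase (f b))).erase (f a)) =
      --        insert z ((s.image f).erase (f a))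
      have hba : b ≠ a := fun h => hanotin (h ▸ List.mem_cons_self)
      have hfba : f b ≠ f a := fun h => hba (hf hb ha h)
      have hzfa : z ≠ f a := fun h => hz (h ▸ mem_image_of_mem f ha)
      have hzfb : z ≠ f b := fun h => hz (h ▸ mem_image_of_mem f hb)
      ext t
      simp only [mem_insert, mem_erase, mem_image]
      constructor
      · rintro (rfl | ⟨htfa, (rfl | ⟨htfb, hx⟩)⟩)
        · exact Or.inr ⟨hfba, ⟨b, hb, rfl⟩⟩
        · exact Or.inl rfl
        · exact Or.inr ⟨htfa, hx⟩
      · rintro (rfl | ⟨htfa, hx⟩)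
        · exact Or.inr ⟨hzfa, Or.inl rfl⟩
        · by_cases htfb : t = f b
          · exact Or.inl htfb
          · exact Or.inr ⟨htfa, Or.inr ⟨htfb, hx⟩⟩

private lemma exists_dup_decomp {α : Type*} {L : List α} (h : ¬L.Nodup) :
    ∃ (x : α) (l₁ l₂ l₃ : List α), L = l₁ ++ x :: (l₂ ++ x :: l₃) := by
  induction L with
  | nil => simp at h
  | cons y L ih =>
    by_cases hy : y ∈ L
    · obtain ⟨s, t, rfl⟩ := List.append_of_mem hy
      exact ⟨y, [], s, t, by simp⟩
    · have : ¬L.Nodup := by simpa [List.nodup_cons, hy] using h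
      obtain ⟨x, l₁, l₂, l₃, rfl⟩ := ih this
      exact ⟨x, y :: l₁, l₂, l₃, by simp⟩

private lemma chain_dedup {α : Type*} (r : α → α → Prop) :
    ∀ (N : ℕ) (L : List α) (a : α), L.length ≤ N → List.Chain r a L →
      ∃ M : List α, List.Chain r a M ∧
        (a :: M).getLast (List.cons_ne_nil a M) = (a :: L).getLast (List.cons_ne_nil a L) ∧
        (a :: M).Nodup := by
  intro N
  induction N with
  | zero =>
    intro L a hlen hch
    have : L = [] := List.eq_nil_of_length_eq_zero (Nat.le_zero.mp hlen)
    subst this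
    exact ⟨[], List.Chain.nil, rfl, by simp⟩
  | succ N ih =>
    intro L a hlen hch
    by_cases hnd : (a :: L).Nodup
    · exact ⟨L, hch, rfl, hnd⟩
    · by_cases haL : a ∈ L
      · obtain ⟨s', t, rfl⟩ := List.append_of_mem haL
        have hsplit := (List.isChain_cons_split (l₁ := s') (l₂ := t) (c := a)).mp hch
        have hlen' : t.length ≤ N := by
          simp only [List.length_append, List.length_cons] at hlen
          omega
        obtain ⟨M, hM, hlast, hndM⟩ := ih t a hlen' hsplit.2
        refine ⟨M, hM, ?_, hndM⟩
        rw [hlast]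
        have he : a :: (s' ++ a :: t) = (a :: s') ++ (a :: t) := by simp
        rw [List.getLast_congr _ _ he, List.getLast_append]
        all_goals simp
      · have hndL : ¬L.Nodup := fun h => hnd (List.nodup_cons.mpr ⟨haL, h⟩)
        obtain ⟨x, l₁, l₂, l₃, rfl⟩ := exists_dup_decomp hndL
        have hsp1 := (List.isChain_cons_split (l₁ := l₁) (l₂ := l₂ ++ x :: l₃) (c := x)).mp hch
        have hsp2 := (List.isChain_cons_split (l₁ := l₂) (l₂ := l₃) (c := x)).mp hsp1.2
        have hch' : List.Chain r a (l₁ ++ x :: l₃) :=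
          (List.isChain_cons_split (l₁ := l₁) (l₂ := l₃) (c := x)).mpr ⟨hsp1.1, hsp2.2⟩
        have hlen' : (l₁ ++ x :: l₃).length ≤ N := by
          simp only [List.length_append, List.length_cons] at hlen ⊢
          omega
        obtain ⟨M, hM, hlast, hndM⟩ := ih (l₁ ++ x :: l₃) a hlen' hch'
        refine ⟨M, hM, ?_, hndM⟩
        rw [hlast]
        have he1 : a :: (l₁ ++ x :: l₃) = (a :: l₁) ++ (x :: l₃) := by simp
        have he2 : a :: (l₁ ++ x :: (l₂ ++ x :: l₃)) = (a :: l₁ ++ x :: l₂) ++ (x :: l₃) := by simp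
        rw [List.getLast_congr _ _ he1, List.getLast_append,
            List.getLast_congr _ _ he2, List.getLast_append]
        all_goals simp

private lemma chain_mem_targets {α : Type*} {r : α → α → Prop} :
    ∀ {L : List α} {a : α}, List.Chain r a L → ∀ l ∈ L, ∃ p, r p l := by
  intro L
  induction L with
  | nil => intro a _ l hl; simp at hl
  | cons b L ih =>
    intro a hch l hl
    rcases List.mem_cons.mp hl with rfl | hl
    · exact ⟨a, (List.chain_cons.mp hch).1⟩
    · exact ih (List.chain_cons.mp hch).2 l hl

private lemma chain_split_last {α : Type*} {r : α → α → Prop} :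
    ∀ {L : List α} {a : α}, List.Chain r a L → L ≠ [] →
      ∃ (M : List α) (b : α), L = M ++ [b] ∧ List.Chain r a M ∧
        r ((a :: M).getLast (List.cons_ne_nil a M)) b ∧
        b = (a :: L).getLast (List.cons_ne_nil a L) := by
  intro L
  induction L with
  | nil => intro a _ h; exact absurd rfl h
  | cons x L ih =>
    intro a hch _
    rcases List.chain_cons.mp hch with ⟨hax, hxL⟩
    cases L with
    | nil => exact ⟨[], x, rfl, List.Chain.nil, by simpa using hax, by simp⟩
    | cons y L' =>
      obtain ⟨M, b, hLeq, hchM, hr, hb⟩ := ih hxL (List.cons_ne_nil y L')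
      refine ⟨x :: M, b, by rw [List.cons_append, hLeq], List.chain_cons.mpr ⟨hax, hchM⟩, ?_, ?_⟩
      · have : (a :: x :: M).getLast (List.cons_ne_nil _ _) =
            (x :: M).getLast (List.cons_ne_nil _ _) := by
          simp [List.getLast_cons]
        rw [this]
        exact hr
      · rw [hb]
        simp [List.getLast_cons]


private lemma final_step (n : ℕ) (G : Fin n → Fin n → Fin n → Prop)
    (h1 : ∀ i v, n < 2 * (univ.filter (fun y => G i v y)).card)
    (h2 : ∀ i w, n ≤ 2 * (univ.filter (fun z => G i z w)).card)
    (s : Finset (Fin n)) (f g : Fin n → Fin n)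
    (hcard : s.card + 1 = n)
    (hf : Set.InjOn f ↑s) (hg : Set.InjOn g ↑s)
    (hG : ∀ i ∈ s, G i (g i) (f i)) :
    ∃ (s' : Finset (Fin n)) (f' g' : Fin n → Fin n),
      s'.card = n ∧ Set.InjOn f' ↑s' ∧ Set.InjOn g' ↑s' ∧ ∀ i ∈ s', G i (g' i) (f' i) := by
  have hvex : ((s.image g)ᶜ).Nonempty := by
    rw [← card_pos, card_compl, Fintype.card_fin]
    have := card_image_le (f := g) (s := s)
    omega
  obtain ⟨v, hv'⟩ := hvex
  have hv : v ∉ s.image g := mem_compl.mp hv'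
  have hwex : ((s.image f)ᶜ).Nonempty := by
    rw [← card_pos, card_compl, Fintype.card_fin]
    have := card_image_le (f := f) (s := s)
    omega
  obtain ⟨w, hw'⟩ := hwex
  have hw : w ∉ s.image f := mem_compl.mp hw'
  have hcex : (sᶜ).Nonempty := by
    rw [← card_pos, card_compl, Fintype.card_fin]; omega
  obtain ⟨c, hcm⟩ := hcex
  have hc : c ∉ s := mem_compl.mp hcm
  have himf : s.image f = univ.erase w := by
    apply eq_of_subset_of_card_le
    · intro y hy
      exact mem_erase.mpr ⟨fun h => hw (h ▸ hy), mem_univ _⟩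
    · rw [card_erase_of_mem (mem_univ _), card_univ, Fintype.card_fin,
        card_image_of_injOn hf]
      omega
  have himg : s.image g = univ.erase v := by
    apply eq_of_subset_of_card_le
    · intro z hz
      exact mem_erase.mpr ⟨fun h => hv (h ▸ hz), mem_univ _⟩
    · rw [card_erase_of_mem (mem_univ _), card_univ, Fintype.card_fin,
        card_image_of_injOn hg]
      omega
  by_cases hdir : G c v w
  · obtain ⟨hf', hg', hG', hcard', -, -⟩ := add_edge hf hg hG hc hv hw hdir
    exact ⟨_, _, _, by rw [hcard', hcard], hf', hg', hG'⟩
  by_contra hno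
  set D : Fin n → Fin n → Prop := fun p q => p ∈ s ∧ q ∈ s ∧ G p (g p) (f q) with hD
  -- Win pattern 1: an S-start path ending at a colour whose own vertex sees w.
  have hW1 : ∀ i₀ ∈ s, G c v (f i₀) → ∀ i, Relation.ReflTransGen D i₀ i → ¬G i (g i) w := by
    intro i₀ hi₀ hS0 i hreach hB
    apply hno
    obtain ⟨L, hchainL, hlastL⟩ := List.exists_isChain_cons_of_relationReflTransGen hreach
    obtain ⟨M, hM, hlastM, hndM⟩ := chain_dedup D L.length L i₀ le_rfl hchainL
    have hgl : (i₀ :: M).getLast (List.cons_ne_nil _ _) = i := by rw [hlastM]; exact hlastL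
    have hmemM : ∀ l ∈ i₀ :: M, l ∈ s := by
      intro l hl
      rcases List.mem_cons.mp hl with rfl | hl
      · exact hi₀
      · obtain ⟨p, hp⟩ := chain_mem_targets hM l hl
        exact hp.2.1
    have hchain' : List.Chain (fun p q => G p (g p) (f q)) i₀ M :=
      List.Chain.imp (fun a b hab => hab.2.2) hM
    have hlastarc : G ((i₀ :: M).getLast (List.cons_ne_nil _ _))
        (g ((i₀ :: M).getLast (List.cons_ne_nil _ _))) w := by rw [hgl]; exact hB
    obtain ⟨f₁, hf₁, hG₁, hagree₁, himg₁⟩ :=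
      repoint (G := G) (s := s) (g := g) M i₀ f w hf hG hndM hmemM hw hchain' hlastarc
    have hfi₀ : f i₀ ∉ s.image f₁ := by
      rw [himg₁]
      intro hmem
      rcases mem_insert.mp hmem with h | h
      · exact hw (h ▸ mem_image_of_mem f hi₀)
      · exact (mem_erase.mp h).1 rfl
    obtain ⟨hf2, hg2, hG2, hcard2, -, -⟩ := add_edge hf₁ hg hG₁ hc hv hfi₀ hS0
    exact ⟨_, _, _, by rw [hcard2, hcard], hf2, hg2, hG2⟩
  -- Win pattern 2: a path from i₀ to j with j ∈ T and G j v (f i₀).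
  have hW2 : ∀ j ∈ s, G c (g j) w → ∀ i₀ ∈ s, Relation.ReflTransGen D i₀ j → ¬G j v (f i₀) := by
    intro j hjs hTj i₀ hi₀ hreach hP
    apply hno
    have hsub : s.erase j ⊆ s := erase_subset _ _
    have hfe : Set.InjOn f ↑(s.erase j) := hf.mono (by exact_mod_cast hsub)
    have hge : Set.InjOn g ↑(s.erase j) := hg.mono (by exact_mod_cast hsub)
    have hGe : ∀ a ∈ s.erase j, G a (g a) (f a) := fun a ha => hG a (hsub ha)
    obtain ⟨hf1, hg1, hG1, hcard1, himf1, himg1⟩ :=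
      add_edge hfe hge hGe (c := c) (v := g j) (w := w)
        (hc := fun h => hc (hsub h))
        (hv := not_mem_image_of_injOn hg hsub hjs (notMem_erase _ _))
        (hw := fun h => hw (image_subset_image hsub h))
        hTj
    have hjnotsb : j ∉ insert c (s.erase j) := by
      intro hmem
      rcases mem_insert.mp hmem with h | h
      · exact hc (by rw [← h]; exact hjs)
      · exact notMem_erase _ _ h
    have hvnotsb : v ∉ (insert c (s.erase j)).image (Function.update g c (g j)) := by
      rw [himg1]
      intro hmem
      rcases mem_insert.mp hmem with h | h
      · exact hv (by rw [h]; exact mem_image_of_mem g hjs)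
      · exact hv (image_subset_image hsub h)
    have hfjnot : f j ∉ (insert c (s.erase j)).image (Function.update f c w) := by
      rw [himf1]
      intro hmem
      rcases mem_insert.mp hmem with h | h
      · exact hw (by rw [← h]; exact mem_image_of_mem f hjs)
      · exact not_mem_image_of_injOn hf hsub hjs (notMem_erase _ _) h
    have hcards : 0 < s.card := card_pos.mpr ⟨j, hjs⟩
    by_cases hij : i₀ = j
    · subst hij
      obtain ⟨hf2, hg2, hG2, hcard2, -, -⟩ :=
        add_edge hf1 hg1 hG1 (c := i₀) (v := v) (w := f i₀)
          (hc := hjnotsb) (hv := hvnotsb) (hw := hfjnot) hP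
      refine ⟨_, _, _, ?_, hf2, hg2, hG2⟩
      rw [hcard2, hcard1, card_erase_of_mem hjs]
      omega
    · obtain ⟨L, hchainL, hlastL⟩ := List.exists_isChain_cons_of_relationReflTransGen hreach
      obtain ⟨M, hM, hlastM, hndM⟩ := chain_dedup D L.length L i₀ le_rfl hchainL
      have hglj : (i₀ :: M).getLast (List.cons_ne_nil _ _) = j := by rw [hlastM]; exact hlastL
      have hMne : M ≠ [] := by
        intro h
        subst h
        simp at hglj
        exact hij hglj
      obtain ⟨M', b, hMeq, hchM', hrlast, hbeq⟩ := chain_split_last hM hMne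
      have hbj : b = j := by rw [hbeq]; exact hglj
      rw [hbj] at hMeq hrlast
      have heq2 : i₀ :: M = (i₀ :: M') ++ [j] := by rw [hMeq]; rfl
      have hnd2 : ((i₀ :: M') ++ [j]).Nodup := heq2 ▸ hndM
      rw [List.nodup_append] at hnd2
      have hndP : (i₀ :: M').Nodup := hnd2.1
      have hjP : j ∉ i₀ :: M' := fun hmem => hnd2.2.2 j hmem j (by simp) rfl
      have hmemP : ∀ l ∈ i₀ :: M', l ∈ s := by
        intro l hl
        rcases List.mem_cons.mp hl with rfl | hl
        · exact hi₀
        · obtain ⟨p, hp⟩ := chain_mem_targets hchM' l hl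
          exact hp.2.1
      have hmemPb : ∀ l ∈ i₀ :: M', l ∈ insert c (s.erase j) := by
        intro l hl
        exact mem_insert_of_mem (mem_erase.mpr ⟨fun h => hjP (h ▸ hl), hmemP l hl⟩)
      have hfbeq : ∀ l ∈ s, Function.update f c w l = f l :=
        fun l hl => Function.update_of_ne (by rintro rfl; exact hc hl) _ _
      have hgbeq : ∀ l ∈ s, Function.update g c (g j) l = g l :=
        fun l hl => Function.update_of_ne (by rintro rfl; exact hc hl) _ _
      have hchainb : List.Chain
          (fun p q => G p (Function.update g c (g j) p) (Function.update f c w q)) i₀ M' := by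
        refine List.Chain.imp ?_ hchM'
        intro a b hab
        rw [hgbeq a hab.1, hfbeq b hab.2.1]
        exact hab.2.2
      have hlastmem : (i₀ :: M').getLast (List.cons_ne_nil _ _) ∈ s :=
        hmemP _ (List.getLast_mem _)
      have hlastarcb : G ((i₀ :: M').getLast (List.cons_ne_nil _ _))
          (Function.update g c (g j) ((i₀ :: M').getLast (List.cons_ne_nil _ _))) (f j) := by
        rw [hgbeq _ hlastmem]
        exact hrlast.2.2
      obtain ⟨f₂, hf₂, hG₂, hagree₂, himg₂⟩ :=
        repoint (G := G) (s := insert c (s.erase j)) (g := Function.update g c (g j))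
          M' i₀ (Function.update f c w) (f j) hf1 hG1 hndP hmemPb hfjnot hchainb hlastarcb
      have hfi₀not : f i₀ ∉ (insert c (s.erase j)).image f₂ := by
        rw [himg₂, hfbeq i₀ hi₀]
        intro hmem
        rcases mem_insert.mp hmem with h | h
        · exact hij (hf hi₀ hjs h)
        · exact (mem_erase.mp h).1 rfl
      obtain ⟨hf3, hg3, hG3, hcard3, -, -⟩ :=
        add_edge hf₂ hg1 hG₂ (c := j) (v := v) (w := f i₀)
          (hc := hjnotsb) (hv := hvnotsb) (hw := hfi₀not) hP
      refine ⟨_, _, _, ?_, hf3, hg3, hG3⟩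
      rw [hcard3, hcard1, card_erase_of_mem hjs]
      omega
  -- Counting
  have hS : n < 2 * (s.filter (fun i => G c v (f i))).card := by
    have hle : (univ.filter (fun y => G c v y)).card ≤ (s.filter (fun i => G c v (f i))).card := by
      refine le_trans (card_le_card ?_) (card_image_le (f := f) (s := s.filter (fun i => G c v (f i))))
      intro y hy
      have hGy : G c v y := (mem_filter.mp hy).2
      have hyw : y ≠ w := fun h => hdir (h ▸ hGy)
      have hyim : y ∈ s.image f := by
        rw [himf]; exact mem_erase.mpr ⟨hyw, mem_univ _⟩
      obtain ⟨i, hi, rfl⟩ := mem_image.mp hyim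
      exact mem_image_of_mem f (mem_filter.mpr ⟨hi, hGy⟩)
    have := h1 c v
    omega
  have hT : n ≤ 2 * (s.filter (fun j => G c (g j) w)).card := by
    have hle : (univ.filter (fun z => G c z w)).card ≤ (s.filter (fun j => G c (g j) w)).card := by
      refine le_trans (card_le_card ?_) (card_image_le (f := g) (s := s.filter (fun j => G c (g j) w)))
      intro z hz
      have hGz : G c z w := (mem_filter.mp hz).2
      have hzv : z ≠ v := fun h => hdir (h ▸ hGz)
      have hzim : z ∈ s.image g := by
        rw [himg]; exact mem_erase.mpr ⟨hzv, mem_univ _⟩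
      obtain ⟨j, hj, rfl⟩ := mem_image.mp hzim
      exact mem_image_of_mem g (mem_filter.mpr ⟨hj, hGz⟩)
    have := h2 c w
    omega
  have main : ∀ (k : ℕ) (Z : Finset (Fin n)), Z.card ≤ k → Z ⊆ s → Z.Nonempty →
      (∀ i ∈ Z, ∀ l ∈ s, G i (g i) (f l) → l ∈ Z) →
      (∀ i ∈ Z, ∃ i₀, (i₀ ∈ s ∧ G c v (f i₀)) ∧ Relation.ReflTransGen D i₀ i) → False := by
    intro k
    induction k with
    | zero =>
      intro Z hk hZs hne _ _
      obtain ⟨i, hi⟩ := hne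
      have := card_pos.mpr ⟨i, hi⟩
      omega
    | succ k ih =>
      intro Z hk hZs hne hclosed hreach
      obtain ⟨i, hi⟩ := hne
      obtain ⟨i₀, ⟨hi₀s, hi₀S⟩, hrti⟩ := hreach i hi
      have hBi : ¬G i (g i) w := hW1 i₀ hi₀s hi₀S i hrti
      have hsubZ : s.filter (fun l => G i (g i) (f l)) ⊆ Z := by
        intro l hl
        exact hclosed i hi l (mem_filter.mp hl).1 (mem_filter.mp hl).2
      have hZcard : n < 2 * Z.card := by
        have hle : (univ.filter (fun y => G i (g i) y)).card ≤
            (s.filter (fun l => G i (g i) (f l))).card := by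
          refine le_trans (card_le_card ?_) (card_image_le (f := f) (s := s.filter (fun l => G i (g i) (f l))))
          intro y hy
          have hGy : G i (g i) y := (mem_filter.mp hy).2
          have hyw : y ≠ w := fun h => hBi (h ▸ hGy)
          have hyim : y ∈ s.image f := by
            rw [himf]; exact mem_erase.mpr ⟨hyw, mem_univ _⟩
          obtain ⟨l, hl, rfl⟩ := mem_image.mp hyim
          exact mem_image_of_mem f (mem_filter.mpr ⟨hl, hGy⟩)
        have h1' := h1 i (g i)
        have := card_le_card hsubZ
        omega
      have hjex : (Z ∩ s.filter (fun j => G c (g j) w)).Nonempty := by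
        rw [← card_pos]
        have hu := card_union_add_card_inter Z (s.filter (fun j => G c (g j) w))
        have hsubu : (Z ∪ s.filter (fun j => G c (g j) w)).card ≤ s.card :=
          card_le_card (union_subset hZs (filter_subset _ _))
        omega
      obtain ⟨j, hj⟩ := hjex
      have hjZ : j ∈ Z := (mem_inter.mp hj).1
      have hjT : G c (g j) w := (mem_filter.mp (mem_inter.mp hj).2).2
      have hjs' : j ∈ s := hZs hjZ
      by_cases hAnc : ∀ i' ∈ Z, Relation.ReflTransGen D i' j
      · -- packing contradiction
        have hNv : (univ.filter (fun y => G j v y)) ⊆ insert w ((s \ Z).image f) := by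
          intro y hy
          have hGy : G j v y := (mem_filter.mp hy).2
          by_cases hyw : y = w
          · exact hyw ▸ mem_insert_self _ _
          · have hyim : y ∈ s.image f := by
              rw [himf]; exact mem_erase.mpr ⟨hyw, mem_univ _⟩
            obtain ⟨l, hl, rfl⟩ := mem_image.mp hyim
            refine mem_insert_of_mem (mem_image_of_mem f (mem_sdiff.mpr ⟨hl, fun hlZ => ?_⟩))
            exact hW2 j hjs' hjT l hl (hAnc l hlZ) hGy
        have hc1 := card_le_card hNv
        have hc2 : (insert w ((s \ Z).image f)).card ≤ ((s \ Z).image f).card + 1 :=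
          card_insert_le _ _
        have hc3 : ((s \ Z).image f).card ≤ (s \ Z).card := card_image_le
        have hc4 : (s \ Z).card = s.card - Z.card := card_sdiff_of_subset hZs
        have hc5 : Z.card ≤ s.card := card_le_card hZs
        have := h1 j v
        omega
      · push_neg at hAnc
        obtain ⟨i', hi'Z, hi'n⟩ := hAnc
        set Anc := Z.filter (fun p => Relation.ReflTransGen D p j) with hAncdef
        have hjAnc : j ∈ Anc := mem_filter.mpr ⟨hjZ, Relation.ReflTransGen.refl⟩
        have hZ'ne : (Z \ Anc).Nonempty :=
          ⟨i', mem_sdiff.mpr ⟨hi'Z, fun hmem => hi'n (mem_filter.mp hmem).2⟩⟩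
        have hZ'card : (Z \ Anc).card ≤ k := by
          have h1'' : (Z \ Anc).card + Anc.card = Z.card :=
            card_sdiff_add_card_eq_card (filter_subset _ _)
          have h2'' : 0 < Anc.card := card_pos.mpr ⟨j, hjAnc⟩
          omega
        refine ih (Z \ Anc) hZ'card (fun p hp => hZs (mem_sdiff.mp hp).1) hZ'ne ?_ ?_
        · intro p hp l hls harc
          have hpZ : p ∈ Z := (mem_sdiff.mp hp).1
          have hlZ : l ∈ Z := hclosed p hpZ l hls harc
          refine mem_sdiff.mpr ⟨hlZ, fun hlA => ?_⟩
          have hrtl : Relation.ReflTransGen D l j := (mem_filter.mp hlA).2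
          have : Relation.ReflTransGen D p j :=
            Relation.ReflTransGen.head ⟨hZs hpZ, hls, harc⟩ hrtl
          exact (mem_sdiff.mp hp).2 (mem_filter.mpr ⟨hpZ, this⟩)
        · intro p hp
          exact hreach p (mem_sdiff.mp hp).1
  -- launch the induction with the reachable closure of S
  have hR : False := by
    set R := s.filter (fun i => ∃ i₀, (i₀ ∈ s ∧ G c v (f i₀)) ∧ Relation.ReflTransGen D i₀ i)
      with hRdef
    refine main R.card R le_rfl (filter_subset _ _) ?_ ?_ ?_
    · -- nonempty: some i₀ ∈ S
      have hSpos : 0 < (s.filter (fun i => G c v (f i))).card := by omega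
      obtain ⟨i₀, hi₀⟩ := card_pos.mp hSpos
      have hi₀s : i₀ ∈ s := (mem_filter.mp hi₀).1
      have hi₀S : G c v (f i₀) := (mem_filter.mp hi₀).2
      exact ⟨i₀, mem_filter.mpr ⟨hi₀s, ⟨i₀, ⟨hi₀s, hi₀S⟩, Relation.ReflTransGen.refl⟩⟩⟩
    · intro i hiR l hls harc
      obtain ⟨i₀, hstart, hrt⟩ := (mem_filter.mp hiR).2
      refine mem_filter.mpr ⟨hls, ⟨i₀, hstart, ?_⟩⟩
      exact hrt.tail ⟨(mem_filter.mp hiR).1, hls, harc⟩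
    · intro i hiR
      exact (mem_filter.mp hiR).2
  exact hR

private lemma exists_partial (n : ℕ) (G : Fin n → Fin n → Fin n → Prop)
    (h1 : ∀ i v, n < 2 * (univ.filter (fun y => G i v y)).card)
    (h2 : ∀ i w, n ≤ 2 * (univ.filter (fun z => G i z w)).card) :
    ∀ k, k ≤ n → ∃ (s : Finset (Fin n)) (f g : Fin n → Fin n),
      s.card = k ∧ Set.InjOn f ↑s ∧ Set.InjOn g ↑s ∧ ∀ i ∈ s, G i (g i) (f i) := by
  intro k
  induction k with
  | zero =>
    intro _
    exact ⟨∅, id, id, by simp, by simp, by simp, by simp⟩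
  | succ k ih =>
    intro hk
    obtain ⟨s, f, g, hcard, hf, hg, hG⟩ := ih (Nat.le_of_succ_le hk)
    have hkn : k < n := hk
    have hvex : ((s.image g)ᶜ).Nonempty := by
      rw [← card_pos, card_compl, Fintype.card_fin]
      have := card_image_le (f := g) (s := s)
      omega
    obtain ⟨v, hv'⟩ := hvex
    have hv : v ∉ s.image g := mem_compl.mp hv'
    have hwex : ((s.image f)ᶜ).Nonempty := by
      rw [← card_pos, card_compl, Fintype.card_fin]
      have := card_image_le (f := f) (s := s)
      omega
    obtain ⟨w, hw'⟩ := hwex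
    have hw : w ∉ s.image f := mem_compl.mp hw'
    by_cases hlast : k + 1 = n
    · -- final step
      obtain ⟨s', f', g', hcard', hf', hg', hG'⟩ :=
        final_step n G h1 h2 s f g (by omega) hf hg hG
      exact ⟨s', f', g', by omega, hf', hg', hG'⟩
    · -- TWO free colours
      have h2c : 1 < (sᶜ).card := by
        rw [card_compl, Fintype.card_fin]; omega
      obtain ⟨c₁, hc₁m, c₂, hc₂m, hcc⟩ := one_lt_card.mp h2c
      have hc₁ : c₁ ∉ s := mem_compl.mp hc₁m
      have hc₂ : c₂ ∉ s := mem_compl.mp hc₂m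
      by_cases hA1 : ∃ y, G c₁ v y ∧ y ∉ s.image f
      · obtain ⟨y, hy1, hy2⟩ := hA1
        obtain ⟨hf', hg', hG', hcard', -, -⟩ := add_edge hf hg hG hc₁ hv hy2 hy1
        exact ⟨_, _, _, by rw [hcard', hcard], hf', hg', hG'⟩
      · by_cases hA2 : ∃ z, G c₂ z w ∧ z ∉ s.image g
        · obtain ⟨z, hz1, hz2⟩ := hA2
          obtain ⟨hf', hg', hG', hcard', -, -⟩ := add_edge hf hg hG hc₂ hz2 hw hz1
          exact ⟨_, _, _, by rw [hcard', hcard], hf', hg', hG'⟩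
        · push_neg at hA1 hA2
          set J₁ := s.filter (fun j => G c₁ v (f j)) with hJ₁def
          set J₂ := s.filter (fun j => G c₂ (g j) w) with hJ₂def
          have hJ₁ : n < 2 * J₁.card := by
            have hle : (univ.filter (fun y => G c₁ v y)).card ≤ J₁.card := by
              refine le_trans (card_le_card ?_) (card_image_le (f := f) (s := J₁))
              intro y hy
              have hGy : G c₁ v y := (mem_filter.mp hy).2
              obtain ⟨j, hj, rfl⟩ := mem_image.mp (hA1 y hGy)
              exact mem_image_of_mem f (mem_filter.mpr ⟨hj, hGy⟩)
            have := h1 c₁ v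
            omega
          have hJ₂ : n ≤ 2 * J₂.card := by
            have hle : (univ.filter (fun z => G c₂ z w)).card ≤ J₂.card := by
              refine le_trans (card_le_card ?_) (card_image_le (f := g) (s := J₂))
              intro z hz
              have hGz : G c₂ z w := (mem_filter.mp hz).2
              obtain ⟨j, hj, rfl⟩ := mem_image.mp (hA2 z hGz)
              exact mem_image_of_mem g (mem_filter.mpr ⟨hj, hGz⟩)
            have := h2 c₂ w
            omega
          have hmeet : (J₁ ∩ J₂).Nonempty := by
            rw [← card_pos]
            have hu := card_union_add_card_inter J₁ J₂
            have hsub : (J₁ ∪ J₂).card ≤ s.card :=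
              card_le_card (union_subset (filter_subset _ _) (filter_subset _ _))
            omega
          obtain ⟨j, hjm⟩ := hmeet
          have hjs : j ∈ s := (mem_filter.mp (mem_inter.mp hjm).1).1
          have hGj₁ : G c₁ v (f j) := (mem_filter.mp (mem_inter.mp hjm).1).2
          have hGj₂ : G c₂ (g j) w := (mem_filter.mp (mem_inter.mp hjm).2).2
          have hsub : s.erase j ⊆ s := erase_subset _ _
          have hfe : Set.InjOn f ↑(s.erase j) := hf.mono (by exact_mod_cast hsub)
          have hge : Set.InjOn g ↑(s.erase j) := hg.mono (by exact_mod_cast hsub)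
          have hGe : ∀ a ∈ s.erase j, G a (g a) (f a) := fun a ha => hG a (hsub ha)
          obtain ⟨hf1, hg1, hG1, hcard1, himf1, himg1⟩ :=
            add_edge hfe hge hGe (c := c₁) (v := v) (w := f j)
              (hc := fun h => hc₁ (hsub h))
              (hv := fun h => hv (image_subset_image hsub h))
              (hw := not_mem_image_of_injOn hf hsub hjs (notMem_erase _ _))
              hGj₁
          obtain ⟨hf2, hg2, hG2, hcard2, himf2, himg2⟩ :=
            add_edge hf1 hg1 hG1 (c := c₂) (v := g j) (w := w)
              (hc := by
                intro hmem
                rcases mem_insert.mp hmem with h | h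
                · exact hcc (h.symm)
                · exact hc₂ (hsub h))
              (hv := by
                rw [himg1]
                intro hmem
                rcases mem_insert.mp hmem with h | h
                · exact hv (by rw [← h]; exact mem_image_of_mem g hjs)
                · exact not_mem_image_of_injOn hg hsub hjs (notMem_erase _ _) h)
              (hw := by
                rw [himf1]
                intro hmem
                rcases mem_insert.mp hmem with h | h
                · exact hw (by rw [h]; exact mem_image_of_mem f hjs)
                · exact hw (image_subset_image hsub h))
              hGj₂
          refine ⟨_, _, _, ?_, hf2, hg2, hG2⟩
          rw [hcard2, hcard1, card_erase_of_mem hjs]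
          have hk1 : 0 < s.card := card_pos.mpr ⟨j, hjs⟩
          omega

/-- **Bradshaw's theorem: transversal perfect matchings in bipartite graph collections.**
`G i v w` means that in the `i`-th bipartite graph the vertex `v ∈ V₁` is joined to
`w ∈ V₂` (both sides are copies of `Fin n`).  If in every graph every vertex of `V₁` has
degree greater than `n/2` and every vertex of `V₂` has degree at least `n/2`, then the
collection contains a transversal perfect matching: a perfect matching `f : V₁ ≃ V₂`
of the complete bipartite graph together with a bijection `φ` from the matching edges
(indexed by their endpoint in `V₁`) to the colours with `v (f v) ∈ G (φ v)`. -/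
theorem transversal_bipartite_perfect_matching (n : ℕ)
    (G : Fin n → Fin n → Fin n → Prop)
    (h1 : ∀ i v, (n : ℝ) / 2 < Nat.card {w : Fin n // G i v w})
    (h2 : ∀ i w, (n : ℝ) / 2 ≤ Nat.card {v : Fin n // G i v w}) :
    ∃ f φ : Fin n ≃ Fin n, ∀ v : Fin n, G (φ v) v (f v) := by
  have h1' : ∀ i v, n < 2 * (univ.filter (fun y => G i v y)).card := by
    intro i v
    have h := h1 i v
    rw [Nat.card_eq_fintype_card, Fintype.card_subtype] at h
    rw [div_lt_iff₀ (by norm_num : (0:ℝ) < 2)] at h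
    exact_mod_cast (by linarith :
      (n : ℝ) < 2 * ((univ.filter (fun y => G i v y)).card : ℝ))
  have h2' : ∀ i w, n ≤ 2 * (univ.filter (fun z => G i z w)).card := by
    intro i w
    have h := h2 i w
    rw [Nat.card_eq_fintype_card, Fintype.card_subtype] at h
    rw [div_le_iff₀ (by norm_num : (0:ℝ) < 2)] at h
    exact_mod_cast (by linarith :
      (n : ℝ) ≤ 2 * ((univ.filter (fun z => G i z w)).card : ℝ))
  obtain ⟨s, f, g, hcard, hf, hg, hG⟩ := exists_partial n G h1' h2' n le_rfl
  have hsuniv : s = univ := eq_univ_of_card s (by rw [hcard, Fintype.card_fin])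
  subst hsuniv
  have hfinj : Function.Injective f :=
    Set.injOn_univ.mp (by simpa using hf)
  have hginj : Function.Injective g :=
    Set.injOn_univ.mp (by simpa using hg)
  let ef := Equiv.ofBijective f (Finite.injective_iff_bijective.mp hfinj)
  let eg := Equiv.ofBijective g (Finite.injective_iff_bijective.mp hginj)
  refine ⟨eg.symm.trans ef, eg.symm, fun v => ?_⟩
  have h := hG (eg.symm v) (mem_univ _)
  have hgv : g (eg.symm v) = v := eg.apply_symm_apply v
  rw [hgv] at h
  exact h
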